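/- arXiv:1605.08709 — 2 statements merged into one kernel-verified Lean document; each statement's English description precedes it below -/
import Mathlib

section
/- Let ρ′ be a real-valued polynomial on ℂ² with bidegree decomposition ρ′ = Σ_{p,q} ρ′_{p,q}, where ρ′_{p,q} is homogeneous of bidegree (p,q) and ρ′_{q,p} = conj(ρ′_{p,q}). Assume Q⁰(ρ′_{p,q}) = 0 for every (p,q) with p ≥ 2 and q ≥ p + 4. Suppose Z₀ = (z₀,w₀) with |z₀|² + |w₀|² = 1 is such that the loop g(t) := Q⁰(ρ′)(e^{it}Z₀), t ∈ [0,2π], never vanishes. Then the winding number of g about 0 is strictly positive. -/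
noncomputable section

open Complex Matrix Set

/-- Wirtinger derivative `∂/∂z` (first coordinate) of `f : ℂ × ℂ → ℂ`. -/
def wdz (f : ℂ × ℂ → ℂ) (p : ℂ × ℂ) : ℂ :=
  (fderiv ℝ f p (1, 0) - Complex.I * fderiv ℝ f p (Complex.I, 0)) / 2

/-- Wirtinger derivative `∂/∂z̄` (first coordinate). -/
def wdzb (f : ℂ × ℂ → ℂ) (p : ℂ × ℂ) : ℂ :=
  (fderiv ℝ f p (1, 0) + Complex.I * fderiv ℝ f p (Complex.I, 0)) / 2

/-- Wirtinger derivative `∂/∂w` (second coordinate). -/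
def wdw (f : ℂ × ℂ → ℂ) (p : ℂ × ℂ) : ℂ :=
  (fderiv ℝ f p (0, 1) - Complex.I * fderiv ℝ f p (0, Complex.I)) / 2

/-- Wirtinger derivative `∂/∂w̄` (second coordinate). -/
def wdwb (f : ℂ × ℂ → ℂ) (p : ℂ × ℂ) : ℂ :=
  (fderiv ℝ f p (0, 1) + Complex.I * fderiv ℝ f p (0, Complex.I)) / 2

/-- The operator `L := -ρ_w ∂_z + ρ_z ∂_w` associated with `ρ`. -/
def Lop (ρ f : ℂ × ℂ → ℂ) : ℂ × ℂ → ℂ :=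
  fun p => -(wdw ρ p) * wdz f p + wdz ρ p * wdw f p

/-- The operator `L̄ := -ρ_w̄ ∂_z̄ + ρ_z̄ ∂_w̄` associated with `ρ`. -/
def Lbar (ρ f : ℂ × ℂ → ℂ) : ℂ × ℂ → ℂ :=
  fun p => -(wdwb ρ p) * wdzb f p + wdzb ρ p * wdwb f p

/-- The function `ρ_{Z²}(L,L) = ρ_zz ρ_w² - 2 ρ_zw ρ_z ρ_w + ρ_ww ρ_z²`. -/
def rhoZ2LL (ρ : ℂ × ℂ → ℂ) : ℂ × ℂ → ℂ :=
  fun p => wdz (wdz ρ) p * (wdw ρ p) ^ 2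
    - 2 * wdw (wdz ρ) p * wdz ρ p * wdw ρ p
    + wdw (wdw ρ) p * (wdz ρ p) ^ 2

/-- The row functions of the matrix `A_n(ρ)`: for `i ≤ n` the monomial `ρ_z^i ρ_w^{n-i}`,
and for `i = n + 1 + s` (with `0 ≤ s ≤ n - 3`) the function `ρ_z^s ρ_w^{n-3-s} ρ_{Z²}(L,L)`. -/
def rowA (ρ : ℂ × ℂ → ℂ) (n i : ℕ) : ℂ × ℂ → ℂ :=
  if i ≤ n then fun p => (wdz ρ p) ^ i * (wdw ρ p) ^ (n - i)
  else fun p => (wdz ρ p) ^ (i - (n + 1)) * (wdw ρ p) ^ (n - 3 - (i - (n + 1))) * rhoZ2LL ρ p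

/-- The `(2n-1) × (2n-1)` matrix `A_n(ρ)` at the point `p`; the `(i,j)` entry is
`L̄^j` applied to the `i`-th row function, evaluated at `p`. -/
def matA (ρ : ℂ × ℂ → ℂ) (n : ℕ) (p : ℂ × ℂ) :
    Matrix (Fin (2 * n - 1)) (Fin (2 * n - 1)) ℂ :=
  fun i j => (Lbar ρ)^[(j : ℕ)] (rowA ρ n (i : ℕ)) p

/-- The `(n+1) × (n+1)` matrix `D_n(ρ) = (L̄^j (ρ_z^k ρ_w^{n-k}))_{0 ≤ j,k ≤ n}` at `p`. -/
def matD (ρ : ℂ × ℂ → ℂ) (n : ℕ) (p : ℂ × ℂ) : Matrix (Fin (n + 1)) (Fin (n + 1)) ℂ :=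
  fun k j => (Lbar ρ)^[(j : ℕ)] (fun q => (wdz ρ q) ^ (k : ℕ) * (wdw ρ q) ^ (n - (k : ℕ))) p

/-- The determinant of the complex Jacobian matrix of a map `H : ℂ² → ℂ²`
(computed via Wirtinger derivatives of the two components). -/
def detJac (H : ℂ × ℂ → ℂ × ℂ) (p : ℂ × ℂ) : ℂ :=
  wdz (fun q => (H q).1) p * wdw (fun q => (H q).2) p
    - wdw (fun q => (H q).1) p * wdz (fun q => (H q).2) p

/-- The operator `L̄₀ := -w ∂_z̄ + z ∂_w̄` (the operator `L̄` of the sphere). -/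
def Lbar0 (f : ℂ × ℂ → ℂ) : ℂ × ℂ → ℂ :=
  fun p => -p.2 * wdzb f p + p.1 * wdwb f p

/-- `Q⁰(R) := L̄₀⁴ ( w̄² R_zz - 2 z̄ w̄ R_zw + z̄² R_ww )`. -/
def Q0 (R : ℂ × ℂ → ℂ) : ℂ × ℂ → ℂ :=
  Lbar0^[4] (fun p => (starRingEnd ℂ p.2) ^ 2 * wdz (wdz R) p
    - 2 * starRingEnd ℂ p.1 * starRingEnd ℂ p.2 * wdw (wdz R) p
    + (starRingEnd ℂ p.1) ^ 2 * wdw (wdw R) p)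

/-- `R` is a homogeneous polynomial of bidegree `(p, q)` on `ℂ²`: a linear combination of
the monomials `z^{α₁} w^{α₂} z̄^{β₁} w̄^{β₂}` with `α₁ + α₂ = p` and `β₁ + β₂ = q`. -/
def IsBihom (R : ℂ × ℂ → ℂ) (p q : ℕ) : Prop :=
  ∃ c : Fin (p + 1) → Fin (q + 1) → ℂ, ∀ z w : ℂ,
    R (z, w) = ∑ a : Fin (p + 1), ∑ b : Fin (q + 1),
      c a b * z ^ (a : ℕ) * w ^ (p - (a : ℕ)) *
        (starRingEnd ℂ z) ^ (b : ℕ) * (starRingEnd ℂ w) ^ (q - (b : ℕ))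

/-- The winding number about `0` of the loop `γ : [0, 2π] → ℂ ∖ {0}`:
`W(γ) = (1/(2πi)) ∫₀^{2π} γ'(t)/γ(t) dt`. -/
def winding (γ : ℝ → ℂ) : ℂ :=
  (1 / (2 * (Real.pi : ℂ) * Complex.I)) * ∫ t in (0 : ℝ)..(2 * Real.pi), deriv γ t / γ t


namespace QW

structure Mon where
  c : ℂ
  a : ℕ
  b : ℕ
  a' : ℕ
  b' : ℕ

def meval (m : Mon) (p : ℂ × ℂ) : ℂ :=
  m.c * p.1 ^ m.a * p.2 ^ m.b * (starRingEnd ℂ p.1) ^ m.a' * (starRingEnd ℂ p.2) ^ m.b'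

def dz (m : Mon) : Mon := ⟨m.c * m.a, m.a - 1, m.b, m.a', m.b'⟩
def dw (m : Mon) : Mon := ⟨m.c * m.b, m.a, m.b - 1, m.a', m.b'⟩
def dzb (m : Mon) : Mon := ⟨m.c * m.a', m.a, m.b, m.a' - 1, m.b'⟩
def dwb (m : Mon) : Mon := ⟨m.c * m.b', m.a, m.b, m.a', m.b' - 1⟩

def fstL : (ℂ × ℂ) →L[ℝ] ℂ := ContinuousLinearMap.fst ℝ ℂ ℂ
def sndL : (ℂ × ℂ) →L[ℝ] ℂ := ContinuousLinearMap.snd ℝ ℂ ℂ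
def conjL : ℂ →L[ℝ] ℂ := Complex.conjCLE.toContinuousLinearMap

def mD (m : Mon) (p : ℂ × ℂ) : (ℂ × ℂ) →L[ℝ] ℂ :=
  meval (dz m) p • fstL + meval (dw m) p • sndL
  + meval (dzb m) p • (conjL.comp fstL) + meval (dwb m) p • (conjL.comp sndL)

lemma mD_apply (m : Mon) (p v : ℂ × ℂ) :
    mD m p v = meval (dz m) p * v.1 + meval (dw m) p * v.2
      + meval (dzb m) p * (starRingEnd ℂ v.1) + meval (dwb m) p * (starRingEnd ℂ v.2) := by
  simp [mD, fstL, sndL, conjL, smul_eq_mul]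

lemma meval_hasFDerivAt (m : Mon) (p : ℂ × ℂ) : HasFDerivAt (meval m) (mD m p) p := by
  have hz : HasFDerivAt (fun q : ℂ × ℂ => q.1 ^ m.a)
      (((ContinuousLinearMap.smulRight (1 : ℂ →L[ℂ] ℂ)
        ((m.a : ℂ) * p.1 ^ (m.a - 1))).restrictScalars ℝ).comp fstL) p :=
    ((hasDerivAt_pow m.a p.1).hasFDerivAt.restrictScalars ℝ).comp p hasFDerivAt_fst
  have hw : HasFDerivAt (fun q : ℂ × ℂ => q.2 ^ m.b)
      (((ContinuousLinearMap.smulRight (1 : ℂ →L[ℂ] ℂ)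
        ((m.b : ℂ) * p.2 ^ (m.b - 1))).restrictScalars ℝ).comp sndL) p :=
    ((hasDerivAt_pow m.b p.2).hasFDerivAt.restrictScalars ℝ).comp p hasFDerivAt_snd
  have hcz : HasFDerivAt (fun q : ℂ × ℂ => (starRingEnd ℂ q.1) ^ m.a')
      (((ContinuousLinearMap.smulRight (1 : ℂ →L[ℂ] ℂ)
        ((m.a' : ℂ) * (starRingEnd ℂ p.1) ^ (m.a' - 1))).restrictScalars ℝ).comp
          (conjL.comp fstL)) p := by
    have h0 : HasFDerivAt (fun q : ℂ × ℂ => starRingEnd ℂ q.1) (conjL.comp fstL) p :=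
      (conjL.comp fstL).hasFDerivAt
    exact ((hasDerivAt_pow m.a' (starRingEnd ℂ p.1)).hasFDerivAt.restrictScalars ℝ).comp p h0
  have hcw : HasFDerivAt (fun q : ℂ × ℂ => (starRingEnd ℂ q.2) ^ m.b')
      (((ContinuousLinearMap.smulRight (1 : ℂ →L[ℂ] ℂ)
        ((m.b' : ℂ) * (starRingEnd ℂ p.2) ^ (m.b' - 1))).restrictScalars ℝ).comp
          (conjL.comp sndL)) p := by
    have h0 : HasFDerivAt (fun q : ℂ × ℂ => starRingEnd ℂ q.2) (conjL.comp sndL) p :=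
      (conjL.comp sndL).hasFDerivAt
    exact ((hasDerivAt_pow m.b' (starRingEnd ℂ p.2)).hasFDerivAt.restrictScalars ℝ).comp p h0
  have hc : HasFDerivAt (fun _ : ℂ × ℂ => m.c) (0 : (ℂ × ℂ) →L[ℝ] ℂ) p := hasFDerivAt_const _ _
  have hbig := (((hc.mul hz).mul hw).mul hcz).mul hcw
  refine hbig.congr_fderiv ?_
  refine ContinuousLinearMap.ext fun v => ?_
  simp [mD_apply, meval, dz, dw, dzb, dwb, fstL, sndL, conjL, smul_eq_mul]
  ring

/-! ## Lists of monomials -/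

def eval (L : List Mon) (p : ℂ × ℂ) : ℂ := (L.map (fun m => meval m p)).sum

def lD (L : List Mon) (p : ℂ × ℂ) : (ℂ × ℂ) →L[ℝ] ℂ := (L.map (fun m => mD m p)).sum

lemma eval_hasFDerivAt (L : List Mon) (p : ℂ × ℂ) : HasFDerivAt (eval L) (lD L p) p := by
  induction L with
  | nil => exact hasFDerivAt_const 0 p
  | cons m L ih =>
      have h := (meval_hasFDerivAt m p).add ih
      have he : eval (m :: L) = fun q => meval m q + eval L q := by
        funext q; simp [eval]
      rw [he]
      simp only [lD, List.map_cons, List.sum_cons]; exact h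

lemma lD_apply (L : List Mon) (p v : ℂ × ℂ) :
    lD L p v = (L.map (fun m => mD m p v)).sum := by
  induction L with
  | nil => simp [lD]
  | cons m L ih => simp [lD, ContinuousLinearMap.add_apply] at ih ⊢; exact ih


lemma sum_comb {α : Type*} (f g h : α → ℂ) (c : ℂ) (H : ∀ m, f m + c * g m = h m) :
    ∀ L : List α, (L.map f).sum + c * (L.map g).sum = (L.map h).sum
  | [] => by simp
  | m :: L => by
      simp only [List.map_cons, List.sum_cons, mul_add]
      rw [← H m, ← sum_comb f g h c H L]; ring

lemma sum_two {α : Type*} (f : α → ℂ) (L : List α) :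
    (L.map (fun m => f m * 2)).sum = (L.map f).sum * 2 := by
  induction L with
  | nil => simp
  | cons m L ih => simp [ih]; ring

lemma wdz_eval (L : List Mon) (p : ℂ × ℂ) : wdz (eval L) p = eval (L.map dz) p := by
  rw [wdz, (eval_hasFDerivAt L p).fderiv, lD_apply, lD_apply]
  rw [div_eq_iff (two_ne_zero), eval, List.map_map]
  have H : ∀ m : Mon, mD m p (1, 0) + (-Complex.I) * mD m p (Complex.I, 0)
      = ((fun m => meval m p) ∘ dz) m * 2 := by
    intro m; rw [mD_apply, mD_apply]; simp [Complex.conj_I]; ring_nf; rw [Complex.I_sq]; ring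
  rw [← sum_two ((fun m => meval m p) ∘ dz), ← sum_comb _ _ _ _ H L]; ring

lemma wdzb_eval (L : List Mon) (p : ℂ × ℂ) : wdzb (eval L) p = eval (L.map dzb) p := by
  rw [wdzb, (eval_hasFDerivAt L p).fderiv, lD_apply, lD_apply]
  rw [div_eq_iff (two_ne_zero), eval, List.map_map]
  have H : ∀ m : Mon, mD m p (1, 0) + (Complex.I) * mD m p (Complex.I, 0)
      = ((fun m => meval m p) ∘ dzb) m * 2 := by
    intro m; rw [mD_apply, mD_apply]; simp [Complex.conj_I]; ring_nf; rw [Complex.I_sq]; ring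
  rw [← sum_two ((fun m => meval m p) ∘ dzb), ← sum_comb _ _ _ _ H L]

lemma wdw_eval (L : List Mon) (p : ℂ × ℂ) : wdw (eval L) p = eval (L.map dw) p := by
  rw [wdw, (eval_hasFDerivAt L p).fderiv, lD_apply, lD_apply]
  rw [div_eq_iff (two_ne_zero), eval, List.map_map]
  have H : ∀ m : Mon, mD m p (0, 1) + (-Complex.I) * mD m p (0, Complex.I)
      = ((fun m => meval m p) ∘ dw) m * 2 := by
    intro m; rw [mD_apply, mD_apply]; simp [Complex.conj_I]; ring_nf; rw [Complex.I_sq]; ring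
  rw [← sum_two ((fun m => meval m p) ∘ dw), ← sum_comb _ _ _ _ H L]; ring

lemma wdwb_eval (L : List Mon) (p : ℂ × ℂ) : wdwb (eval L) p = eval (L.map dwb) p := by
  rw [wdwb, (eval_hasFDerivAt L p).fderiv, lD_apply, lD_apply]
  rw [div_eq_iff (two_ne_zero), eval, List.map_map]
  have H : ∀ m : Mon, mD m p (0, 1) + (Complex.I) * mD m p (0, Complex.I)
      = ((fun m => meval m p) ∘ dwb) m * 2 := by
    intro m; rw [mD_apply, mD_apply]; simp [Complex.conj_I]; ring_nf; rw [Complex.I_sq]; ring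
  rw [← sum_two ((fun m => meval m p) ∘ dwb), ← sum_comb _ _ _ _ H L]



/-! ## list operators -/

def sc (c₀ : ℂ) (L : List Mon) : List Mon := L.map fun m => ⟨c₀ * m.c, m.a, m.b, m.a', m.b'⟩
def mulz (L : List Mon) : List Mon := L.map fun m => ⟨m.c, m.a + 1, m.b, m.a', m.b'⟩
def mulw (L : List Mon) : List Mon := L.map fun m => ⟨m.c, m.a, m.b + 1, m.a', m.b'⟩
def mulzb (L : List Mon) : List Mon := L.map fun m => ⟨m.c, m.a, m.b, m.a' + 1, m.b'⟩
def mulwb (L : List Mon) : List Mon := L.map fun m => ⟨m.c, m.a, m.b, m.a', m.b' + 1⟩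

def LB (L : List Mon) : List Mon := sc (-1) (mulw (L.map dzb)) ++ mulz (L.map dwb)

def Sec (L : List Mon) : List Mon :=
  mulwb (mulwb ((L.map dz).map dz))
    ++ sc (-2) (mulzb (mulwb ((L.map dz).map dw)))
    ++ mulzb (mulzb ((L.map dw).map dw))

def Q0L (L : List Mon) : List Mon := LB^[4] (Sec L)

lemma eval_append (A B : List Mon) (p : ℂ × ℂ) : eval (A ++ B) p = eval A p + eval B p := by
  simp [eval]

lemma eval_map_mul (φ : Mon → Mon) (g : ℂ × ℂ → ℂ)
    (H : ∀ m p, meval (φ m) p = g p * meval m p) (L : List Mon) (p : ℂ × ℂ) :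
    eval (L.map φ) p = g p * eval L p := by
  induction L with
  | nil => simp [eval]
  | cons m L ih => simp only [List.map_cons, eval, List.sum_cons] at ih ⊢; rw [H, ih, mul_add]

lemma eval_sc (c₀ : ℂ) (L : List Mon) (p : ℂ × ℂ) : eval (sc c₀ L) p = c₀ * eval L p :=
  eval_map_mul _ (fun _ => c₀) (by intro m p; simp [meval]; ring) L p

lemma eval_mulz (L : List Mon) (p : ℂ × ℂ) : eval (mulz L) p = p.1 * eval L p :=
  eval_map_mul _ (fun p => p.1) (by intro m p; simp [meval, pow_succ]; ring) L p

lemma eval_mulw (L : List Mon) (p : ℂ × ℂ) : eval (mulw L) p = p.2 * eval L p :=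
  eval_map_mul _ (fun p => p.2) (by intro m p; simp [meval, pow_succ]; ring) L p

lemma eval_mulzb (L : List Mon) (p : ℂ × ℂ) :
    eval (mulzb L) p = starRingEnd ℂ p.1 * eval L p :=
  eval_map_mul _ (fun p => starRingEnd ℂ p.1) (by intro m p; simp [meval, pow_succ]; ring) L p

lemma eval_mulwb (L : List Mon) (p : ℂ × ℂ) :
    eval (mulwb L) p = starRingEnd ℂ p.2 * eval L p :=
  eval_map_mul _ (fun p => starRingEnd ℂ p.2) (by intro m p; simp [meval, pow_succ]; ring) L p

lemma Lbar0_eval (L : List Mon) : Lbar0 (eval L) = eval (LB L) := by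
  funext p
  rw [Lbar0, wdzb_eval, wdwb_eval, LB, eval_append, eval_sc, eval_mulw, eval_mulz]
  ring

lemma iter_Lbar0_eval (n : ℕ) (L : List Mon) : Lbar0^[n] (eval L) = eval (LB^[n] L) := by
  induction n generalizing L with
  | zero => rfl
  | succ n ih =>
      rw [Function.iterate_succ_apply, Function.iterate_succ_apply, Lbar0_eval, ih]

lemma secfun_eval (L : List Mon) :
    (fun p => (starRingEnd ℂ p.2) ^ 2 * wdz (wdz (eval L)) p
      - 2 * starRingEnd ℂ p.1 * starRingEnd ℂ p.2 * wdw (wdz (eval L)) p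
      + (starRingEnd ℂ p.1) ^ 2 * wdw (wdw (eval L)) p) = eval (Sec L) := by
  funext p
  have h1 : wdz (eval L) = eval (L.map dz) := funext (wdz_eval L)
  have h2 : wdw (eval L) = eval (L.map dw) := funext (wdw_eval L)
  rw [h1, h2, wdz_eval, wdw_eval, wdw_eval, Sec, eval_append, eval_append,
    eval_mulwb, eval_mulwb, eval_sc, eval_mulzb, eval_mulwb, eval_mulzb, eval_mulzb]
  ring

lemma Q0_eval (L : List Mon) : Q0 (eval L) = eval (Q0L L) := by
  rw [Q0, secfun_eval, Q0L, iter_Lbar0_eval]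

/-! ## additivity of Q0 over appended lists -/

lemma LB_append (A B : List Mon) :
    LB (A ++ B) = (sc (-1) (mulw (A.map dzb)) ++ mulz (A.map dwb))
      ++ (sc (-1) (mulw (B.map dzb)) ++ mulz (B.map dwb)) ∨ True := Or.inr trivial

lemma iter_eval_append (n : ℕ) :
    ∀ A B : List Mon, ∀ p, eval (LB^[n] (A ++ B)) p = eval (LB^[n] A) p + eval (LB^[n] B) p := by
  induction n with
  | zero => intro A B p; exact eval_append A B p
  | succ n ih =>
      intro A B p
      rw [Function.iterate_succ_apply, Function.iterate_succ_apply, Function.iterate_succ_apply]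
      have h : LB (A ++ B)
          = (sc (-1) (mulw (A.map dzb)) ++ sc (-1) (mulw (B.map dzb)))
            ++ (mulz (A.map dwb) ++ mulz (B.map dwb)) := by
        simp [LB, sc, mulw, mulz, List.map_append]
      rw [h]
      simp only [LB, ih]
      ring

lemma Q0_eval_append (A B : List Mon) (p : ℂ × ℂ) :
    Q0 (eval (A ++ B)) p = Q0 (eval A) p + Q0 (eval B) p := by
  rw [Q0_eval, Q0_eval, Q0_eval, Q0L, Q0L, Q0L]
  have h : Sec (A ++ B)
      = (mulwb (mulwb ((A.map dz).map dz)) ++ mulwb (mulwb ((B.map dz).map dz)))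
        ++ ((sc (-2) (mulzb (mulwb ((A.map dz).map dw)))
            ++ sc (-2) (mulzb (mulwb ((B.map dz).map dw))))
          ++ (mulzb (mulzb ((A.map dw).map dw)) ++ mulzb (mulzb ((B.map dw).map dw)))) := by
    simp [Sec, sc, mulzb, mulwb, List.map_append]
  rw [h]
  simp only [Sec, iter_eval_append]
  ring

lemma Q0_eval_nil (p : ℂ × ℂ) : Q0 (eval []) p = 0 := by
  rw [Q0_eval]
  have h : Q0L ([] : List Mon) = [] := by
    have hLB : ∀ n, LB^[n] ([] : List Mon) = [] := by
      intro n; induction n with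
      | zero => rfl
      | succ n ih => rw [Function.iterate_succ_apply]; simp [LB, sc, mulw, mulz]; exact ih
    simp [Q0L, Sec, mulwb, mulzb, sc]
    exact hLB 4
  rw [h]; simp [eval]

lemma Q0_eval_flatMap {α : Type*} (l : List α) (G : α → List Mon) (p : ℂ × ℂ) :
    Q0 (eval (l.flatMap G)) p = (l.map fun x => Q0 (eval (G x)) p).sum := by
  induction l with
  | nil => simpa using Q0_eval_nil p
  | cons x l ih => rw [List.flatMap_cons, Q0_eval_append, ih]; simp


/-! ## weights -/

def wt (m : Mon) : ℤ := (m.a : ℤ) + m.b - m.a' - m.b'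

def HW (k : ℤ) (L : List Mon) : Prop := ∀ m ∈ L, m.c = 0 ∨ wt m = k

lemma HW_map {k k' : ℤ} {L : List Mon} (φ : Mon → Mon)
    (H : ∀ m : Mon, m.c = 0 ∨ wt m = k → (φ m).c = 0 ∨ wt (φ m) = k')
    (h : HW k L) : HW k' (L.map φ) := by
  intro m hm
  rcases List.mem_map.1 hm with ⟨m₀, hm₀, rfl⟩
  exact H m₀ (h m₀ hm₀)

lemma HW_dz {k : ℤ} {L : List Mon} (h : HW k L) : HW (k - 1) (L.map dz) := by
  refine HW_map dz ?_ h
  rintro m (hc | hw)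
  · left; simp [dz, hc]
  · rcases Nat.eq_zero_or_pos m.a with h0 | h0
    · left; simp [dz, h0]
    · right; simp only [dz, wt] at hw ⊢; push_cast [Nat.cast_sub h0]; omega

lemma HW_dw {k : ℤ} {L : List Mon} (h : HW k L) : HW (k - 1) (L.map dw) := by
  refine HW_map dw ?_ h
  rintro m (hc | hw)
  · left; simp [dw, hc]
  · rcases Nat.eq_zero_or_pos m.b with h0 | h0
    · left; simp [dw, h0]
    · right; simp only [dw, wt] at hw ⊢; push_cast [Nat.cast_sub h0]; omega

lemma HW_dzb {k : ℤ} {L : List Mon} (h : HW k L) : HW (k + 1) (L.map dzb) := by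
  refine HW_map dzb ?_ h
  rintro m (hc | hw)
  · left; simp [dzb, hc]
  · rcases Nat.eq_zero_or_pos m.a' with h0 | h0
    · left; simp [dzb, h0]
    · right; simp only [dzb, wt] at hw ⊢; push_cast [Nat.cast_sub h0]; omega

lemma HW_dwb {k : ℤ} {L : List Mon} (h : HW k L) : HW (k + 1) (L.map dwb) := by
  refine HW_map dwb ?_ h
  rintro m (hc | hw)
  · left; simp [dwb, hc]
  · rcases Nat.eq_zero_or_pos m.b' with h0 | h0
    · left; simp [dwb, h0]
    · right; simp only [dwb, wt] at hw ⊢; push_cast [Nat.cast_sub h0]; omega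

lemma HW_sc {k : ℤ} {L : List Mon} (c₀ : ℂ) (h : HW k L) : HW k (sc c₀ L) := by
  refine HW_map _ ?_ h
  rintro m (hc | hw)
  · left; simp [hc]
  · right; simpa [wt] using hw

lemma HW_mulz {k : ℤ} {L : List Mon} (h : HW k L) : HW (k + 1) (mulz L) := by
  refine HW_map _ ?_ h
  rintro m (hc | hw)
  · left; simpa using hc
  · right; simp only [wt] at hw ⊢; push_cast; omega

lemma HW_mulw {k : ℤ} {L : List Mon} (h : HW k L) : HW (k + 1) (mulw L) := by
  refine HW_map _ ?_ h
  rintro m (hc | hw)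
  · left; simpa using hc
  · right; simp only [wt] at hw ⊢; push_cast; omega

lemma HW_mulzb {k : ℤ} {L : List Mon} (h : HW k L) : HW (k - 1) (mulzb L) := by
  refine HW_map _ ?_ h
  rintro m (hc | hw)
  · left; simpa using hc
  · right; simp only [wt] at hw ⊢; push_cast; omega

lemma HW_mulwb {k : ℤ} {L : List Mon} (h : HW k L) : HW (k - 1) (mulwb L) := by
  refine HW_map _ ?_ h
  rintro m (hc | hw)
  · left; simpa using hc
  · right; simp only [wt] at hw ⊢; push_cast; omega

lemma HW_append {k : ℤ} {A B : List Mon} (hA : HW k A) (hB : HW k B) : HW k (A ++ B) := by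
  intro m hm
  rcases List.mem_append.1 hm with h | h
  · exact hA m h
  · exact hB m h

lemma HW_LB {k : ℤ} {L : List Mon} (h : HW k L) : HW (k + 2) (LB L) := by
  refine HW_append (HW_sc _ ?_) ?_
  · have := HW_mulw (HW_dzb h); convert this using 1; ring
  · have := HW_mulz (HW_dwb h); convert this using 1; ring

lemma HW_Sec {k : ℤ} {L : List Mon} (h : HW k L) : HW (k - 4) (Sec L) := by
  refine HW_append (HW_append ?_ (HW_sc _ ?_)) ?_
  · have := HW_mulwb (HW_mulwb (HW_dz (HW_dz h))); convert this using 1; ring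
  · have := HW_mulzb (HW_mulwb (HW_dw (HW_dz h))); convert this using 1; ring
  · have := HW_mulzb (HW_mulzb (HW_dw (HW_dw h))); convert this using 1; ring

lemma iterate4 {α : Type*} (f : α → α) (x : α) : f^[4] x = f (f (f (f x))) := by
  rw [show (4:ℕ) = 3 + 1 from rfl, Function.iterate_succ_apply',
    show (3:ℕ) = 2 + 1 from rfl, Function.iterate_succ_apply',
    show (2:ℕ) = 1 + 1 from rfl, Function.iterate_succ_apply',
    Function.iterate_one]

lemma HW_Q0L {k : ℤ} {L : List Mon} (h : HW k L) : HW (k + 4) (Q0L L) := by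
  have h1 := HW_LB (HW_LB (HW_LB (HW_LB (HW_Sec h))))
  rw [Q0L, iterate4]
  convert h1 using 1; ring

/-! ## homogeneous scaling -/

lemma meval_homog (m : Mon) (e : ℂ) (he : e ≠ 0) (hce : starRingEnd ℂ e = e⁻¹) (Z : ℂ × ℂ) :
    meval m (e * Z.1, e * Z.2) = e ^ (wt m) * meval m Z := by
  have key : (e : ℂ) ^ m.a * e ^ m.b * (e⁻¹) ^ m.a' * (e⁻¹) ^ m.b' = e ^ (wt m) := by
    rw [wt, ← zpow_natCast e m.a, ← zpow_natCast e m.b,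
      ← zpow_natCast e⁻¹ m.a', ← zpow_natCast e⁻¹ m.b', _root_.inv_zpow, _root_.inv_zpow,
      ← _root_.zpow_neg, ← _root_.zpow_neg, ← zpow_add₀ he, ← zpow_add₀ he, ← zpow_add₀ he]
    ring_nf
  rw [meval, meval]
  simp only [_root_.map_mul, hce, mul_pow]
  rw [← key]; ring

lemma eval_homog {k : ℤ} {L : List Mon} (h : HW k L) (e : ℂ) (he : e ≠ 0)
    (hce : starRingEnd ℂ e = e⁻¹) (Z : ℂ × ℂ) :
    eval L (e * Z.1, e * Z.2) = e ^ k * eval L Z := by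
  induction L with
  | nil => simp [eval]
  | cons m L ih =>
      have hm := h m List.mem_cons_self
      have hL : HW k L := fun m' hm' => h m' (List.mem_cons_of_mem m hm')
      simp only [eval, List.map_cons, List.sum_cons] at ih ⊢
      rw [ih hL, mul_add]
      congr 1
      rcases hm with hc | hw
      · simp [meval, hc]
      · rw [meval_homog m e he hce Z, hw]

/-! ## all-zero coefficients -/

def AZ (L : List Mon) : Prop := ∀ m ∈ L, m.c = 0

lemma eval_AZ {L : List Mon} (h : AZ L) (p : ℂ × ℂ) : eval L p = 0 := by
  induction L with
  | nil => simp [eval]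
  | cons m L ih =>
      simp only [eval, List.map_cons, List.sum_cons]
      rw [show (List.map (fun m => meval m p) L).sum = eval L p from rfl,
        ih (fun m' hm' => h m' (List.mem_cons_of_mem m hm'))]
      have := h m List.mem_cons_self
      simp [meval, this]

lemma AZ_map {L : List Mon} (φ : Mon → Mon) (H : ∀ m : Mon, m.c = 0 → (φ m).c = 0)
    (h : AZ L) : AZ (L.map φ) := by
  intro m hm
  rcases List.mem_map.1 hm with ⟨m₀, hm₀, rfl⟩
  exact H m₀ (h m₀ hm₀)

lemma AZ_append {A B : List Mon} (hA : AZ A) (hB : AZ B) : AZ (A ++ B) := by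
  intro m hm
  rcases List.mem_append.1 hm with h | h
  · exact hA m h
  · exact hB m h

lemma AZ_LB {L : List Mon} (h : AZ L) : AZ (LB L) := by
  refine AZ_append (AZ_map _ ?_ (AZ_map _ ?_ (AZ_map _ ?_ h))) (AZ_map _ ?_ (AZ_map _ ?_ h)) <;>
    (intro m hm; simp_all [dzb, dwb])

lemma AZ_Sec_of_lowdeg {L : List Mon} (h : ∀ m ∈ L, m.a + m.b ≤ 1) : AZ (Sec L) := by
  refine AZ_append (AZ_append ?_ ?_) ?_
  · intro m hm
    simp only [mulwb, Sec, List.mem_map] at hm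
    obtain ⟨m1, ⟨m2, ⟨m3, ⟨m4, hm4, rfl⟩, rfl⟩, rfl⟩, rfl⟩ := hm
    have := h m4 hm4
    simp only [dz]
    rcases Nat.eq_zero_or_pos m4.a with h0 | h0
    · simp [h0]
    · have h1 : m4.a = 1 := by omega
      simp [h1]
  · intro m hm
    simp only [sc, mulzb, mulwb, List.mem_map] at hm
    obtain ⟨m1, ⟨m2, ⟨m3, ⟨m4, ⟨m5, hm5, rfl⟩, rfl⟩, rfl⟩, rfl⟩, rfl⟩ := hm
    have := h m5 hm5
    simp only [dz, dw]
    rcases Nat.eq_zero_or_pos m5.a with h0 | h0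
    · simp [h0]
    · have : m5.b = 0 := by omega
      simp [this]
  · intro m hm
    simp only [mulzb, List.mem_map] at hm
    obtain ⟨m1, ⟨m2, ⟨m3, ⟨m4, hm4, rfl⟩, rfl⟩, rfl⟩, rfl⟩ := hm
    have := h m4 hm4
    simp only [dw]
    rcases Nat.eq_zero_or_pos m4.b with h0 | h0
    · simp [h0]
    · have h1 : m4.b = 1 := by omega
      simp [h1]

lemma AZ_Q0L_of_lowdeg {L : List Mon} (h : ∀ m ∈ L, m.a + m.b ≤ 1) : AZ (Q0L L) := by
  have h1 := AZ_LB (AZ_LB (AZ_LB (AZ_LB (AZ_Sec_of_lowdeg h))))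
  rw [Q0L, iterate4]
  exact h1


/-! ## bihom lists -/

def bihomList (p q : ℕ) (co : Fin (p+1) → Fin (q+1) → ℂ) : List Mon :=
  (List.finRange (p+1)).flatMap fun a => (List.finRange (q+1)).map fun b =>
    ⟨co a b, (a : ℕ), p - a, (b : ℕ), q - b⟩

lemma eval_flatMap {α : Type*} (l : List α) (G : α → List Mon) (p : ℂ × ℂ) :
    eval (l.flatMap G) p = (l.map fun x => eval (G x) p).sum := by
  induction l with
  | nil => simp [eval]
  | cons x l ih => rw [List.flatMap_cons, eval_append, ih]; simp

lemma eval_bihomList (p q : ℕ) (co : Fin (p+1) → Fin (q+1) → ℂ) (Z : ℂ × ℂ) :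
    eval (bihomList p q co) Z = ∑ a : Fin (p+1), ∑ b : Fin (q+1),
      co a b * Z.1 ^ (a : ℕ) * Z.2 ^ (p - (a : ℕ)) * (starRingEnd ℂ Z.1) ^ (b : ℕ)
        * (starRingEnd ℂ Z.2) ^ (q - (b : ℕ)) := by
  rw [bihomList, eval_flatMap]
  rw [Fin.sum_univ_def]
  congr 1
  refine List.map_congr_left fun a _ => ?_
  rw [eval, List.map_map, Fin.sum_univ_def]
  rfl

lemma mem_bihomList {p q : ℕ} {co : Fin (p+1) → Fin (q+1) → ℂ} {m : Mon}
    (hm : m ∈ bihomList p q co) : m.a + m.b = p ∧ m.a' + m.b' = q := by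
  simp only [bihomList, List.mem_flatMap, List.mem_map, List.mem_finRange, true_and] at hm
  obtain ⟨a, b, rfl⟩ := hm
  have ha := a.isLt
  have hb := b.isLt
  constructor <;> simp <;> omega

lemma HW_bihomList (p q : ℕ) (co : Fin (p+1) → Fin (q+1) → ℂ) :
    HW ((p : ℤ) - q) (bihomList p q co) := by
  intro m hm
  right
  obtain ⟨h1, h2⟩ := mem_bihomList hm
  rw [wt]
  omega

end QW


lemma abs_exp_circle (t : ℝ) : ‖cexp (I * t)‖ = 1 := by
  rw [Complex.norm_exp]; simp

lemma exp_circle_ne {r : ℂ} (hr : ‖r‖ ≠ 1) (t : ℝ) : cexp (I * t) - r ≠ 0 := by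
  intro h
  apply hr
  have : r = cexp (I * t) := by linear_combination -h
  rw [this, abs_exp_circle]

lemma hasDerivAt_expI (t : ℝ) : HasDerivAt (fun s : ℝ => cexp (I * s)) (I * cexp (I * t)) t := by
  have h1 : HasDerivAt (fun s : ℝ => (I * s : ℂ)) I t := by
    simpa using (Complex.ofRealCLM.hasDerivAt (x := t)).const_mul I
  simpa [mul_comm] using h1.cexp

lemma exp_neg_mul_exp (t : ℝ) : cexp (-(I * t)) * cexp (I * t) = 1 := by
  rw [← Complex.exp_add]; simp

lemma circ_lt {r : ℂ} (hr : ‖r‖ < 1) :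
    ∫ t in (0:ℝ)..(2 * Real.pi), (I * cexp (I * t)) / (cexp (I * t) - r)
      = 2 * Real.pi * I := by
  have hne : ∀ t : ℝ, cexp (I * t) - r ≠ 0 := exp_circle_ne (ne_of_lt hr)
  have habs : ∀ t : ℝ, ‖r * cexp (-(I * t))‖ < 1 := by
    intro t
    rw [norm_mul, Complex.norm_exp]
    simpa using hr
  have hu_ne : ∀ t : ℝ, (1 : ℂ) - r * cexp (-(I * t)) ≠ 0 := by
    intro t h
    have heq : r * cexp (-(I * t)) = 1 := by linear_combination -h
    have h2 := habs t
    rw [heq] at h2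
    simp at h2
  have hmem : ∀ t : ℝ, (1 : ℂ) - r * cexp (-(I * t)) ∈ Complex.slitPlane := by
    intro t
    left
    have h1 := Complex.re_le_norm (r * cexp (-(I * t)))
    have h2 := habs t
    simp only [Complex.sub_re, Complex.one_re]
    linarith
  set F : ℝ → ℂ := fun t => I * t + Complex.log (1 - r * cexp (-(I * t))) with hF
  have key : ∀ t : ℝ, HasDerivAt F ((I * cexp (I * t)) / (cexp (I * t) - r)) t := by
    intro t
    have h1 : HasDerivAt (fun s : ℝ => (-(I * s) : ℂ)) (-I) t := by
      have := ((Complex.ofRealCLM.hasDerivAt (x := t)).const_mul I).neg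
      simp only [Complex.ofRealCLM_apply, Complex.ofReal_one, mul_one] at this; exact this
    have h2 : HasDerivAt (fun s : ℝ => (1 : ℂ) - r * cexp (-(I * s)))
        (-(r * (cexp (-(I * t)) * -I))) t := ((h1.cexp.const_mul r).const_sub 1)
    have h3 := (Complex.hasDerivAt_log (hmem t)).comp t h2
    have h4 : HasDerivAt (fun s : ℝ => (I * s : ℂ)) I t := by
      simpa using (Complex.ofRealCLM.hasDerivAt (x := t)).const_mul I
    have h5 := h4.add h3
    refine h5.congr_deriv ?_; symm
    have hm := exp_neg_mul_exp t
    field_simp [hne t, hu_ne t]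
    linear_combination (-r) * hm
  have hcont : Continuous fun t : ℝ => (I * cexp (I * t)) / (cexp (I * t) - r) := by
    apply Continuous.div
    · fun_prop
    · fun_prop
    · exact hne
  have := intervalIntegral.integral_eq_sub_of_hasDerivAt
    (f := F) (fun t _ => key t) (hcont.intervalIntegrable 0 (2 * Real.pi))
  rw [this]
  have h2π : cexp (-(I * ((2 * Real.pi : ℝ) : ℂ))) = 1 := by
    have : (I * ((2 * Real.pi : ℝ) : ℂ)) = 2 * Real.pi * I := by push_cast; ring
    rw [this, Complex.exp_neg, Complex.exp_two_pi_mul_I, inv_one]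
  simp only [hF, h2π]
  push_cast
  simp
  ring

lemma circ_gt {r : ℂ} (hr : 1 < ‖r‖) :
    ∫ t in (0:ℝ)..(2 * Real.pi), (I * cexp (I * t)) / (cexp (I * t) - r) = 0 := by
  have hr0 : r ≠ 0 := by
    intro h; rw [h] at hr; simp at hr; exact absurd hr (by norm_num)
  have hne : ∀ t : ℝ, cexp (I * t) - r ≠ 0 := exp_circle_ne (ne_of_gt hr)
  have habs : ∀ t : ℝ, ‖cexp (I * t) * r⁻¹‖ < 1 := by
    intro t
    rw [norm_mul, abs_exp_circle, norm_inv, one_mul]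
    exact inv_lt_one_of_one_lt₀ hr
  have hu_ne : ∀ t : ℝ, (1 : ℂ) - cexp (I * t) * r⁻¹ ≠ 0 := by
    intro t h
    have heq : cexp (I * t) * r⁻¹ = 1 := by linear_combination -h
    have h2 := habs t
    rw [heq] at h2
    simp at h2
  have hmem : ∀ t : ℝ, (1 : ℂ) - cexp (I * t) * r⁻¹ ∈ Complex.slitPlane := by
    intro t
    left
    have h1 := Complex.re_le_norm (cexp (I * t) * r⁻¹)
    have h2 := habs t
    simp only [Complex.sub_re, Complex.one_re]
    linarith
  set F : ℝ → ℂ := fun t => Complex.log (1 - cexp (I * t) * r⁻¹) with hF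
  have key : ∀ t : ℝ, HasDerivAt F ((I * cexp (I * t)) / (cexp (I * t) - r)) t := by
    intro t
    have h2 : HasDerivAt (fun s : ℝ => (1 : ℂ) - cexp (I * s) * r⁻¹)
        (-(I * cexp (I * t) * r⁻¹)) t := by
      have := ((hasDerivAt_expI t).mul_const r⁻¹).const_sub 1
      simpa using this
    have h3 := (Complex.hasDerivAt_log (hmem t)).comp t h2
    refine h3.congr_deriv ?_; symm
    have hd : (-(cexp (I * t) * r) + r ^ 2) ≠ 0 := by
      intro h
      have h9 : r * (r - cexp (I * t)) = 0 := by linear_combination h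
      rcases mul_eq_zero.1 h9 with h2 | h2
      · exact hr0 h2
      · exact hne t (by linear_combination -h2)
    have hne' : r - cexp (I * t) ≠ 0 := fun h => hne t (by linear_combination -h)
    have h1 : (1 : ℂ) - cexp (I * t) * r⁻¹ = (r - cexp (I * t)) * r⁻¹ := by field_simp
    rw [h1]
    field_simp [hr0, hne t, hne']
    ring
  have hcont : Continuous fun t : ℝ => (I * cexp (I * t)) / (cexp (I * t) - r) := by
    apply Continuous.div
    · fun_prop
    · fun_prop
    · exact hne
  have := intervalIntegral.integral_eq_sub_of_hasDerivAt
    (f := F) (fun t _ => key t) (hcont.intervalIntegrable 0 (2 * Real.pi))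
  rw [this]
  have h2π : cexp (I * (2 * (Real.pi : ℂ))) = 1 := by
    rw [show I * (2 * (Real.pi : ℂ)) = 2 * Real.pi * I by ring, Complex.exp_two_pi_mul_I]
  simp only [hF]
  push_cast
  rw [h2π]
  simp

lemma polyWind : ∀ (n : ℕ) (P : Polynomial ℂ), P.natDegree = n → P ≠ 0 →
    (∀ t : ℝ, P.eval (cexp (I * t)) ≠ 0) →
    ∫ t in (0:ℝ)..(2 * Real.pi),
        deriv (fun s : ℝ => P.eval (cexp (I * s))) t / P.eval (cexp (I * t))
      = 2 * Real.pi * I * (((P.roots.filter (fun r => ‖r‖ < 1)).card : ℕ) : ℂ) := by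
  intro n
  induction n using Nat.strong_induction_on with
  | _ n ih =>
    intro P hdeg hP0 hPt
    by_cases hn : P.natDegree = 0
    · obtain ⟨c, rfl⟩ : ∃ c, P = Polynomial.C c := ⟨_, Polynomial.eq_C_of_natDegree_eq_zero hn⟩
      have hc : c ≠ 0 := fun h => hP0 (by rw [h]; simp)
      simp [Polynomial.roots_C, hc]
    · have hdpos : 0 < P.degree := by
        rcases Polynomial.natDegree_pos_iff_degree_pos.mp (Nat.pos_of_ne_zero hn) with h
        exact h
      obtain ⟨r, hr⟩ := Complex.exists_root hdpos
      obtain ⟨Q, hQ⟩ := Polynomial.dvd_iff_isRoot.2 hr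
      have hQ0 : Q ≠ 0 := by rintro rfl; rw [mul_zero] at hQ; exact hP0 hQ
      have hXr : (Polynomial.X - Polynomial.C r) ≠ 0 := Polynomial.X_sub_C_ne_zero r
      have hdQ : Q.natDegree < n := by
        have h1 : P.natDegree = 1 + Q.natDegree := by
          rw [hQ, Polynomial.natDegree_mul hXr hQ0, Polynomial.natDegree_X_sub_C]
        omega
      have hQt : ∀ t : ℝ, Q.eval (cexp (I * t)) ≠ 0 := by
        intro t h
        apply hPt t
        rw [hQ, Polynomial.eval_mul, h, mul_zero]
      have hrt : ∀ t : ℝ, cexp (I * t) - r ≠ 0 := by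
        intro t h
        apply hPt t
        rw [hQ, Polynomial.eval_mul, Polynomial.eval_sub, Polynomial.eval_X, Polynomial.eval_C,
          h, zero_mul]
      have habs : ‖r‖ ≠ 1 := by
        intro h
        apply hrt r.arg
        have : cexp (I * (r.arg : ℂ)) = r := by
          rw [mul_comm]
          conv_rhs => rw [← Complex.norm_mul_exp_arg_mul_I r]
          rw [h]
          simp
        rw [this, sub_self]
      -- derivatives
      have hgD : ∀ t : ℝ, HasDerivAt (fun s : ℝ => Q.eval (cexp (I * s)))
          ((I * cexp (I * t)) * Q.derivative.eval (cexp (I * t))) t := by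
        intro t
        have h1 := (Q.hasDerivAt (cexp (I * t))).scomp t (hasDerivAt_expI t)
        simpa [smul_eq_mul, Function.comp_def] using h1
      have hfD : ∀ t : ℝ, HasDerivAt (fun s : ℝ => cexp (I * s) - r) (I * cexp (I * t)) t :=
        fun t => (hasDerivAt_expI t).sub_const r
      have hPfun : (fun s : ℝ => P.eval (cexp (I * s)))
          = fun s : ℝ => (cexp (I * s) - r) * Q.eval (cexp (I * s)) := by
        funext s; rw [hQ]; simp
      have hPD : ∀ t : ℝ, HasDerivAt (fun s : ℝ => P.eval (cexp (I * s)))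
          ((I * cexp (I * t)) * Q.eval (cexp (I * t))
            + (cexp (I * t) - r) * ((I * cexp (I * t)) * Q.derivative.eval (cexp (I * t)))) t := by
        intro t
        rw [hPfun]
        exact (hfD t).mul (hgD t)
      -- pointwise integrand identity
      have hsplit : ∀ t : ℝ,
          deriv (fun s : ℝ => P.eval (cexp (I * s))) t / P.eval (cexp (I * t))
          = (I * cexp (I * t)) / (cexp (I * t) - r)
            + deriv (fun s : ℝ => Q.eval (cexp (I * s))) t / Q.eval (cexp (I * t)) := by
        intro t
        rw [(hPD t).deriv, (hgD t).deriv]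
        have hPe : P.eval (cexp (I * t)) = (cexp (I * t) - r) * Q.eval (cexp (I * t)) := by
          rw [hQ]; simp
        rw [hPe]
        field_simp [hrt t, hQt t]
      have hi1 : IntervalIntegrable (fun t : ℝ => (I * cexp (I * t)) / (cexp (I * t) - r))
          MeasureTheory.volume 0 (2 * Real.pi) := by
        apply Continuous.intervalIntegrable
        exact Continuous.div (by fun_prop) (by fun_prop) hrt
      have hi2 : IntervalIntegrable
          (fun t : ℝ => deriv (fun s : ℝ => Q.eval (cexp (I * s))) t / Q.eval (cexp (I * t)))
          MeasureTheory.volume 0 (2 * Real.pi) := by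
        have : (fun t : ℝ => deriv (fun s : ℝ => Q.eval (cexp (I * s))) t / Q.eval (cexp (I * t)))
            = fun t : ℝ => ((I * cexp (I * t)) * Q.derivative.eval (cexp (I * t)))
                / Q.eval (cexp (I * t)) := by
          funext t; rw [(hgD t).deriv]
        rw [this]
        apply Continuous.intervalIntegrable
        exact Continuous.div (by fun_prop) (by fun_prop) hQt
      rw [intervalIntegral.integral_congr (g :=
        fun t : ℝ => (I * cexp (I * t)) / (cexp (I * t) - r)
          + deriv (fun s : ℝ => Q.eval (cexp (I * s))) t / Q.eval (cexp (I * t)))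
        (fun t _ => hsplit t)]
      rw [intervalIntegral.integral_add hi1 hi2]
      rw [ih Q.natDegree hdQ Q rfl hQ0 hQt]
      -- roots bookkeeping
      have hroots : P.roots = r ::ₘ Q.roots := by
        rw [hQ, Polynomial.roots_mul (hQ ▸ hP0), Polynomial.roots_X_sub_C]
        rfl
      rw [hroots]
      rw [Multiset.filter_cons]
      rcases lt_or_gt_of_ne habs with hlt | hgt
      · rw [circ_lt hlt]
        simp [hlt]
        ring
      · rw [circ_gt hgt]
        have : ¬ (‖r‖ < 1) := by linarith
        simp [this]


lemma conj_exp_circle (t : ℝ) :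
    starRingEnd ℂ (cexp (I * t)) = (cexp (I * t))⁻¹ := by
  have h1 : starRingEnd ℂ (I * (t : ℂ)) = -(I * t) := by
    simp [Complex.conj_I]
  rw [← Complex.exp_conj, h1, Complex.exp_neg]

/-- **Key step in Proposition 5.4**: let `ρ'` be a real-valued polynomial with bidegree
decomposition `ρ' = Σ ρ'_{p,q}` such that `Q⁰(ρ'_{p,q}) = 0` whenever `p ≥ 2` and
`q ≥ p + 4`. If `Z₀ ∈ S³` is such that the loop `t ↦ Q⁰(ρ')(e^{it} Z₀)` never vanishes, then
its winding number about `0` is a strictly positive integer. -/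
theorem Q0_winding_positive (m : ℕ) (ρ' : ℂ × ℂ → ℂ) (f : ℕ → ℕ → (ℂ × ℂ → ℂ))
    (hbihom : ∀ p q, IsBihom (f p q) p q)
    (hreal : ∀ p q Z, f q p Z = starRingEnd ℂ (f p q Z))
    (hdecomp : ∀ Z, ρ' Z = ∑ p ∈ Finset.range (m + 1), ∑ q ∈ Finset.range (m + 1), f p q Z)
    (hvan : ∀ p q : ℕ, 2 ≤ p → p + 4 ≤ q → ∀ Z, Q0 (f p q) Z = 0)
    (Z₀ : ℂ × ℂ) (hZ₀ : ‖Z₀.1‖ ^ 2 + ‖Z₀.2‖ ^ 2 = 1)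
    (hg : ∀ t : ℝ,
      Q0 ρ' (Complex.exp (Complex.I * (t : ℂ)) * Z₀.1,
        Complex.exp (Complex.I * (t : ℂ)) * Z₀.2) ≠ 0) :
    ∃ k : ℤ, 0 < k ∧
      winding (fun t : ℝ => Q0 ρ' (Complex.exp (Complex.I * (t : ℂ)) * Z₀.1,
        Complex.exp (Complex.I * (t : ℂ)) * Z₀.2)) = (k : ℂ) := by
  classical
  choose co hco using hbihom
  have hfL : ∀ p q : ℕ, f p q = QW.eval (QW.bihomList p q (co p q)) := by
    intro p q
    funext Z
    rw [QW.eval_bihomList, ← hco p q Z.1 Z.2]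
  set Lpq : ℕ → ℕ → List QW.Mon := fun p q => QW.bihomList p q (co p q) with hLpq
  set Lρ : List QW.Mon := (List.finRange (m+1)).flatMap fun p : Fin (m+1) =>
    (List.finRange (m+1)).flatMap fun q : Fin (m+1) => Lpq (p : ℕ) (q : ℕ) with hLρ
  have hρ : ρ' = QW.eval Lρ := by
    funext Z
    rw [hdecomp Z]
    have h1 : QW.eval Lρ Z = ∑ p ∈ Finset.range (m+1), ∑ q ∈ Finset.range (m+1), f p q Z := by
      rw [hLρ, QW.eval_flatMap,
        ← Fin.sum_univ_eq_sum_range (fun p => ∑ q ∈ Finset.range (m+1), f p q Z) (m+1),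
        Fin.sum_univ_def]
      congr 1
      refine List.map_congr_left fun a _ => ?_
      rw [QW.eval_flatMap, ← Fin.sum_univ_eq_sum_range (fun q => f (a : ℕ) q Z) (m+1),
        Fin.sum_univ_def]
      congr 1
      refine List.map_congr_left fun b _ => ?_
      rw [hfL]
    rw [h1]
  have hQsum : ∀ P : ℂ × ℂ, Q0 ρ' P
      = ∑ p : Fin (m+1), ∑ q : Fin (m+1), Q0 (QW.eval (Lpq (p:ℕ) (q:ℕ))) P := by
    intro P
    rw [hρ, hLρ, QW.Q0_eval_flatMap, Fin.sum_univ_def]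
    congr 1
    refine List.map_congr_left fun a _ => ?_
    rw [QW.Q0_eval_flatMap, Fin.sum_univ_def]
  have hvan' : ∀ p q : ℕ, p + 4 ≤ q → ∀ P : ℂ × ℂ, Q0 (QW.eval (Lpq p q)) P = 0 := by
    intro p q hpq P
    by_cases hp : 2 ≤ p
    · rw [hLpq, ← hfL]
      exact hvan p q hp hpq P
    · rw [QW.Q0_eval]
      apply QW.eval_AZ
      apply QW.AZ_Q0L_of_lowdeg
      intro m' hm'
      have h1 := (QW.mem_bihomList hm').1
      omega
  have hhom : ∀ p q : ℕ, ∀ t : ℝ,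
      Q0 (QW.eval (Lpq p q)) (cexp (I * t) * Z₀.1, cexp (I * t) * Z₀.2)
        = (cexp (I * t)) ^ ((p:ℤ) - q + 4) * Q0 (QW.eval (Lpq p q)) Z₀ := by
    intro p q t
    rw [QW.Q0_eval]
    exact QW.eval_homog (QW.HW_Q0L (QW.HW_bihomList p q (co p q)))
      (cexp (I * t)) (Complex.exp_ne_zero _) (conj_exp_circle t) Z₀
  set P : Polynomial ℂ := ∑ p : Fin (m+1), ∑ q : Fin (m+1),
      Polynomial.C (Q0 (QW.eval (Lpq (p:ℕ) (q:ℕ))) Z₀) * Polynomial.X ^ ((p:ℕ) + 4 - (q:ℕ))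
    with hP
  have claimA : ∀ t : ℝ, Q0 ρ' (cexp (I * t) * Z₀.1, cexp (I * t) * Z₀.2)
      = P.eval (cexp (I * t)) := by
    intro t
    rw [hQsum, hP]
    simp only [Polynomial.eval_finset_sum, Polynomial.eval_mul, Polynomial.eval_C,
      Polynomial.eval_pow, Polynomial.eval_X]
    refine Finset.sum_congr rfl fun p _ => Finset.sum_congr rfl fun q _ => ?_
    by_cases hpq : (q : ℕ) ≤ (p : ℕ) + 3
    · rw [hhom, show ((p:ℕ):ℤ) - ((q:ℕ):ℤ) + 4 = (((p:ℕ) + 4 - (q:ℕ) : ℕ) : ℤ) by omega,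
        _root_.zpow_natCast, mul_comm]
    · rw [hvan' (p:ℕ) (q:ℕ) (by omega), hvan' (p:ℕ) (q:ℕ) (by omega), zero_mul]
  have hP0 : P ≠ 0 := by
    intro h
    apply hg 0
    have h1 := claimA 0
    rw [h] at h1
    simpa using h1
  have hPt : ∀ t : ℝ, P.eval (cexp (I * t)) ≠ 0 := by
    intro t h
    exact hg t ((claimA t).trans h)
  have hPeval0 : P.eval 0 = 0 := by
    rw [hP]
    simp only [Polynomial.eval_finset_sum, Polynomial.eval_mul, Polynomial.eval_C,
      Polynomial.eval_pow, Polynomial.eval_X]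
    refine Finset.sum_eq_zero fun p _ => Finset.sum_eq_zero fun q _ => ?_
    by_cases hpq : (p:ℕ) + 4 ≤ (q:ℕ)
    · rw [hvan' (p:ℕ) (q:ℕ) hpq Z₀, zero_mul]
    · rw [zero_pow (by omega : (p:ℕ) + 4 - (q:ℕ) ≠ 0), mul_zero]
  have h0root : (0 : ℂ) ∈ P.roots := Polynomial.mem_roots'.2 ⟨hP0, hPeval0⟩
  have h0f : (0 : ℂ) ∈ P.roots.filter (fun r => ‖r‖ < 1) :=
    Multiset.mem_filter.2 ⟨h0root, by simp⟩
  have hkpos : 0 < (P.roots.filter (fun r => ‖r‖ < 1)).card :=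
    Multiset.card_pos_iff_exists_mem.2 ⟨0, h0f⟩
  refine ⟨((P.roots.filter (fun r => ‖r‖ < 1)).card : ℤ),
    by exact_mod_cast hkpos, ?_⟩
  have hfun : (fun t : ℝ => Q0 ρ' (Complex.exp (Complex.I * (t : ℂ)) * Z₀.1,
      Complex.exp (Complex.I * (t : ℂ)) * Z₀.2)) = fun t : ℝ => P.eval (cexp (I * t)) :=
    funext claimA
  rw [winding]
  simp only [claimA]
  rw [polyWind P.natDegree P rfl hP0 hPt]
  have hπ : (Real.pi : ℂ) ≠ 0 := by exact_mod_cast Real.pi_ne_zero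
  field_simp
  norm_cast
end
end

section
/- Let S³ := {(z,w) ∈ ℂ² : |z|² + |w|² = 1} and let V ⊂ S³ be a subset whose Hausdorff dimension is strictly less than 2 (in the paper, V is the zero set on S³ of a real polynomial, assumed to have no points of dimension ≥ 2 as a real-analytic variety). Then there exists Z₀ ∈ S³ such that the whole circle {e^{it}Z₀ : t ∈ ℝ} is disjoint from V, i.e. e^{it}Z₀ ∉ V for all t ∈ ℝ. -/
noncomputable section

open Complex
open scoped NNReal ENNReal

/-- The Hopf-type invariant `ψ (z, w) = z * conj w`. -/
private def hopfPsi (Z : ℂ × ℂ) : ℂ := Z.1 * (starRingEnd ℂ) Z.2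

private lemma hopfPsi_lipschitz :
    LipschitzOnWith 2 hopfPsi {Z : ℂ × ℂ | ‖Z.1‖ ^ 2 + ‖Z.2‖ ^ 2 = 1} := by
  rw [lipschitzOnWith_iff_dist_le_mul]
  intro Z hZ W hW
  have hZ1 : ‖Z.1‖ ≤ 1 := by
    nlinarith [norm_nonneg Z.1, norm_nonneg Z.2, Set.mem_setOf_eq ▸ hZ]
  have hW2 : ‖W.2‖ ≤ 1 := by
    nlinarith [norm_nonneg W.1, norm_nonneg W.2, Set.mem_setOf_eq ▸ hW]
  have key : hopfPsi Z - hopfPsi W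
      = Z.1 * ((starRingEnd ℂ) Z.2 - (starRingEnd ℂ) W.2)
        + (Z.1 - W.1) * (starRingEnd ℂ) W.2 := by
    simp [hopfPsi]; ring
  have h1 : dist Z.1 W.1 ≤ dist Z W := le_max_left _ _
  have h2 : dist Z.2 W.2 ≤ dist Z W := le_max_right _ _
  have hdnn : (0:ℝ) ≤ dist Z W := dist_nonneg
  calc dist (hopfPsi Z) (hopfPsi W)
      = ‖hopfPsi Z - hopfPsi W‖ := by rw [Complex.dist_eq]
    _ ≤ ‖Z.1 * ((starRingEnd ℂ) Z.2 - (starRingEnd ℂ) W.2)‖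
        + ‖(Z.1 - W.1) * (starRingEnd ℂ) W.2‖ := by
        rw [key]; exact norm_add_le _ _
    _ = ‖Z.1‖ * ‖Z.2 - W.2‖
        + ‖Z.1 - W.1‖ * ‖W.2‖ := by
        rw [norm_mul, norm_mul, ← map_sub, Complex.norm_conj, Complex.norm_conj]
    _ ≤ 1 * dist Z W + dist Z W * 1 := by
        have e1 : ‖Z.2 - W.2‖ = dist Z.2 W.2 := (Complex.dist_eq _ _).symm
        have e2 : ‖Z.1 - W.1‖ = dist Z.1 W.1 := (Complex.dist_eq _ _).symm
        rw [e1, e2]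
        have := norm_nonneg (Z.1 - W.1)
        gcongr
    _ = (2:ℝ≥0) * dist Z W := by push_cast; ring

/-- **Lemma 6.7 (existence of a circle avoiding the umbilical variety)**: if `V` is a subset
of the unit sphere `S³ ⊂ ℂ²` of Hausdorff dimension strictly less than `2`, then some great
circle `t ↦ e^{it} Z₀` (with `Z₀ ∈ S³`) is entirely disjoint from `V`. -/
theorem exists_circle_avoiding (V : Set (ℂ × ℂ))
    (hV : V ⊆ {Z : ℂ × ℂ | ‖Z.1‖ ^ 2 + ‖Z.2‖ ^ 2 = 1})
    (hdim : dimH V < 2) :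
    ∃ Z₀ : ℂ × ℂ, ‖Z₀.1‖ ^ 2 + ‖Z₀.2‖ ^ 2 = 1 ∧
      ∀ t : ℝ, (Complex.exp (Complex.I * (t : ℂ)) * Z₀.1,
        Complex.exp (Complex.I * (t : ℂ)) * Z₀.2) ∉ V := by
  by_contra h
  push_neg at h
  -- every `Z₀` on the sphere has some `t` with `e^{it} Z₀ ∈ V`
  -- Claim: the closed disk of radius 1/2 is contained in `hopfPsi '' V`
  have hball : Metric.ball (0:ℂ) (1/2) ⊆ hopfPsi '' V := by
    intro u hu
    rw [Metric.mem_ball, dist_zero_right] at hu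
    have hu' : ‖u‖ ≤ 1/2 := hu.le
    set m : ℝ := ‖u‖ with hm
    have hm0 : 0 ≤ m := norm_nonneg u
    have hm2 : (0:ℝ) ≤ 1 - 4 * m ^ 2 := by nlinarith [hu']
    set s : ℝ := Real.sqrt (1 - 4 * m ^ 2) with hs
    have hs0 : 0 ≤ s := Real.sqrt_nonneg _
    have hs2 : s ^ 2 = 1 - 4 * m ^ 2 := Real.sq_sqrt hm2
    set a : ℝ := (1 + s) / 2 with ha
    have ha0 : (0:ℝ) < a := by positivity
    have haeq : m ^ 2 = a * (1 - a) := by rw [ha]; nlinarith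
    set r : ℝ := Real.sqrt a with hr
    have hr0 : (0:ℝ) < r := Real.sqrt_pos.mpr ha0
    have hr2 : r ^ 2 = a := Real.sq_sqrt ha0.le
    set Z₀ : ℂ × ℂ := ((r : ℂ), (starRingEnd ℂ) u / (r : ℂ)) with hZ₀
    have hrne : (r : ℂ) ≠ 0 := by exact_mod_cast hr0.ne'
    have habs1 : ‖Z₀.1‖ = r := by
      simp [hZ₀, Complex.norm_real, Real.norm_eq_abs, abs_of_pos hr0]
    have habs2 : ‖Z₀.2‖ = m / r := by
      simp [hZ₀, norm_div, Complex.norm_conj, Complex.norm_real, Real.norm_eq_abs, abs_of_pos hr0, hm]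
    have hsphere : ‖Z₀.1‖ ^ 2 + ‖Z₀.2‖ ^ 2 = 1 := by
      rw [habs1, habs2, div_pow, hr2, haeq]
      field_simp
      ring
    obtain ⟨t, ht⟩ := h Z₀ hsphere
    refine ⟨_, ht, ?_⟩
    have hpsi0 : hopfPsi Z₀ = u := by
      simp only [hopfPsi, hZ₀, map_div₀, Complex.conj_conj, Complex.conj_ofReal]
      field_simp
    simp only [hopfPsi] at hpsi0 ⊢
    rw [map_mul, ← Complex.exp_conj]
    have : (starRingEnd ℂ) (Complex.I * (t:ℂ)) = -(Complex.I * (t:ℂ)) := by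
      simp [Complex.conj_ofReal]
    rw [this]
    calc Complex.exp (Complex.I * (t:ℂ)) * Z₀.1
          * (Complex.exp (-(Complex.I * (t:ℂ))) * (starRingEnd ℂ) Z₀.2)
        = Complex.exp (Complex.I * (t:ℂ)) * Complex.exp (-(Complex.I * (t:ℂ)))
          * (Z₀.1 * (starRingEnd ℂ) Z₀.2) := by ring
      _ = u := by rw [← Complex.exp_add, add_neg_cancel, Complex.exp_zero, one_mul, hpsi0]
  -- dimension bound
  have h2 : (2:ℝ≥0∞) ≤ dimH V := by
    have hdisk : dimH (Metric.ball (0:ℂ) (1/2)) = 2 := by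
      rw [Real.dimH_of_nonempty_interior (E := ℂ)
        (s := Metric.ball (0:ℂ) (1/2)), Complex.finrank_real_complex]
      · norm_num
      · rw [Metric.isOpen_ball.interior_eq]
        exact Metric.nonempty_ball.mpr (by norm_num)
    calc (2:ℝ≥0∞) = dimH (Metric.ball (0:ℂ) (1/2)) := hdisk.symm
      _ ≤ dimH (hopfPsi '' V) := dimH_mono hball
      _ ≤ dimH V := ((hopfPsi_lipschitz).mono hV).dimH_image_le
  exact absurd hdim (not_lt.mpr h2)
end
end
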